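/- Let R be a ring whose classical left quotient ring Q_{l,cl}(R) = C_R⁻¹R exists and is semisimple (Artinian). Then the set of strongly left localizable elements L^s_l(R) = ⋂_{S ∈ max.Den_l(R)} S equals the set C_R of regular elements of R. -/

import Mathlib

/-- A left Ore set in a ring `R`: a multiplicative subset (`1 ∈ S`, `0 ∉ S`,
closed under multiplication) satisfying the left Ore condition. -/
def IsLeftOreSet (R : Type*) [Ring R] (S : Set R) : Prop :=
  (1 : R) ∈ S ∧ (0 : R) ∉ S ∧ (∀ s ∈ S, ∀ t ∈ S, s * t ∈ S) ∧
    ∀ (r : R), ∀ s ∈ S, ∃ s' ∈ S, ∃ r' : R, s' * r = r' * s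

/-- A left denominator set: a left Ore set such that `r * s = 0` implies
`t * r = 0` for some `t ∈ S`. -/
def IsLeftDenSet (R : Type*) [Ring R] (S : Set R) : Prop :=
  IsLeftOreSet R S ∧ ∀ (r : R), ∀ s ∈ S, r * s = 0 → ∃ t ∈ S, t * r = 0

/-- `ass(S) = {r ∈ R | s r = 0 for some s ∈ S}`. -/
def assSet (R : Type*) [Ring R] (S : Set R) : Set R :=
  {r : R | ∃ s ∈ S, s * r = 0}

/-- A maximal left denominator set of `R`. -/
def IsMaxLeftDenSet (R : Type*) [Ring R] (S : Set R) : Prop :=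
  IsLeftDenSet R S ∧ ∀ T : Set R, IsLeftDenSet R T → S ⊆ T → T = S

/-- The set `L^s_l(R)` of strongly left localizable elements: the intersection of
all maximal left denominator sets of `R`. -/
def stronglyLocalizable (R : Type*) [Ring R] : Set R :=
  {r : R | ∀ S : Set R, IsMaxLeftDenSet R S → r ∈ S}

/-- `T_l(R)`: the union of all left denominator sets contained in `L^s_l(R)`
(the largest strong left denominator set). -/
def Tl (R : Type*) [Ring R] : Set R :=
  ⋃₀ {S : Set R | IsLeftDenSet R S ∧ S ⊆ stronglyLocalizable R}

/-- The left localization radical `l_R = ⋂_{S ∈ max.Den_l(R)} ass(S)`. -/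
def lRad (R : Type*) [Ring R] : Set R :=
  {r : R | ∀ S : Set R, IsMaxLeftDenSet R S → r ∈ assSet R S}

/-- `f : R →+* Q` is a left Ore localization of `R` at `S`: elements of `S` become
units, every element of `Q` is of the form `s⁻¹ r`, and `ker f = ass(S)`. -/
def IsLeftLocalization (R : Type*) [Ring R] {Q : Type*} [Ring Q]
    (S : Set R) (f : R →+* Q) : Prop :=
  (∀ s ∈ S, IsUnit (f s)) ∧
  (∀ q : Q, ∃ s ∈ S, ∃ r : R, ∃ u : Qˣ, (u : Q) = f s ∧ q = (↑u⁻¹ : Q) * f r) ∧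
  (∀ r : R, f r = 0 ↔ r ∈ assSet R S)

/-- The set of regular elements (non-zero-divisors) of `R`. -/
def regSet (R : Type*) [Ring R] : Set R :=
  {c : R | ∀ r : R, (r * c = 0 → r = 0) ∧ (c * r = 0 → r = 0)}


section SS
variable {Q : Type*} [Ring Q] [IsSemisimpleRing Q]


private lemma ss_semiprime (w : Q) (h : ∀ q : Q, w * q * w = 0) : w = 0 := by
  obtain ⟨J, hJ⟩ := exists_isCompl (Submodule.span Q {w})
  have h1 : (1 : Q) ∈ Submodule.span Q {w} ⊔ J := by rw [hJ.sup_eq_top]; trivial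
  obtain ⟨p, hp, j, hj, hpj⟩ := Submodule.mem_sup.mp h1
  obtain ⟨q, hq⟩ := Submodule.mem_span_singleton.mp hp
  have hwp : w * p = 0 := by
    rw [← hq, smul_eq_mul, ← mul_assoc, h q]
  have hwj : w = w * j := by
    have := congrArg (w * ·) hpj
    simpa [mul_add, hwp] using this.symm
  have hmem : w ∈ Submodule.span Q {w} ⊓ J := by
    refine ⟨Submodule.mem_span_singleton_self w, ?_⟩
    rw [hwj]
    exact J.smul_mem w hj
  rw [hJ.inf_eq_bot] at hmem
  simpa using hmem

private lemma ss_unit (g : Q) (h : ∀ x : Q, x * g = 0 → x = 0) : IsUnit g := by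
  have hinj : Function.Injective (LinearMap.toSpanSingleton Q Q g) := by
    intro x y hxy
    have h2 : (x - y) * g = 0 := by
      have h3 : x * g = y * g := by
        simpa [LinearMap.toSpanSingleton_apply, smul_eq_mul] using hxy
      rw [sub_mul, h3, sub_self]
    exact sub_eq_zero.mp (h _ h2)
  obtain ⟨y, hy⟩ := IsArtinian.surjective_of_injective_endomorphism _ hinj 1
  have hy' : y * g = 1 := by simpa [LinearMap.toSpanSingleton_apply, smul_eq_mul] using hy
  have hgy : g * y = 1 := by
    have h4 : (g * y - 1) * g = 0 := by
      rw [sub_mul, one_mul, mul_assoc, hy', mul_one, sub_self]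
    have := h _ h4
    rwa [sub_eq_zero] at this
  exact ⟨⟨g, y, hgy, hy'⟩, rfl⟩

private lemma ss_nonunit_lann {g : Q} (h : ¬IsUnit g) : ∃ x : Q, x ≠ 0 ∧ x * g = 0 := by
  by_contra hc
  push_neg at hc
  exact h (ss_unit g fun x hx => by_contra fun h0 => (hc x h0) hx)

private lemma exists_central_idem (I : Submodule Q Q)
    (hI : ∀ x ∈ I, ∀ q : Q, x * q ∈ I) :
    ∃ e : Q, (∀ q, e * q = q * e) ∧ e * e = e ∧ (∀ x, x ∈ I ↔ x * e = x) := by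
  obtain ⟨J, hJ⟩ := exists_isCompl I
  have h1 : (1 : Q) ∈ I ⊔ J := by rw [hJ.sup_eq_top]; trivial
  obtain ⟨e, he, j, hj, hej⟩ := Submodule.mem_sup.mp h1
  have key : ∀ a ∈ I, a * e = a := by
    intro a ha
    have h2 : a * e + a * j = a := by rw [← mul_add, hej, mul_one]
    have hae : a * e ∈ I := I.smul_mem a he
    have haj : a * j ∈ I ⊓ J := by
      constructor
      · have : a * j = a - a * e := eq_sub_of_add_eq' h2
        rw [this]; exact I.sub_mem ha hae
      · exact J.smul_mem a hj
    rw [hJ.inf_eq_bot] at haj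
    have : a * j = 0 := by simpa using haj
    rw [this, add_zero] at h2
    exact h2
  have hmem : ∀ x, x ∈ I ↔ x * e = x := by
    intro x
    exact ⟨key x, fun hx => hx ▸ I.smul_mem x he⟩
  have hidem : e * e = e := key e he
  refine ⟨e, ?_, hidem, hmem⟩
  intro x
  -- e*x*e = e*x
  have h2 : e * x * e = e * x := key _ (hI e he x)
  -- w := x*e - e*(x*e) satisfies wQw = 0
  set w := x * e - e * (x * e) with hw
  have hwI : w ∈ I := I.sub_mem (I.smul_mem x he) (I.smul_mem e (I.smul_mem x he))
  have hew : e * w = 0 := by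
    rw [hw, mul_sub, show e * (e * (x * e)) = e * (x * e) from by rw [← mul_assoc, hidem]]
    exact sub_self _
  have hIw : ∀ a ∈ I, a * w = 0 := by
    intro a ha
    calc a * w = a * e * w := by rw [key a ha]
    _ = a * (e * w) := by rw [mul_assoc]
    _ = 0 := by rw [hew, mul_zero]
  have hw0 : w = 0 := ss_semiprime w fun q => hIw _ (hI w hwI q)
  have h3 : x * e = e * (x * e) := by
    have := sub_eq_zero.mp hw0
    exact this
  rw [h3, ← mul_assoc, h2]
end SS

private def IsPrimEl {Q : Type*} [Ring Q] (e : Q) : Prop :=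
  ∀ x : Q, x ≠ 0 → x * e = x → e ∈ Submodule.span Q (Set.range (fun q => x * q))


section SS2
variable {Q : Type*} [Ring Q] [IsSemisimpleRing Q]

private lemma decomp_aux (N : Submodule Q Q) :
    ∀ e : Q, Submodule.span Q {e} = N → (∀ q : Q, e * q = q * e) → e * e = e →
    ∃ L : List Q,
      (∀ h ∈ L, (∀ q : Q, h * q = q * h) ∧ h * h = h ∧ h ≠ 0 ∧ IsPrimEl h ∧ h * e = h) ∧
      L.Pairwise (fun a b => a * b = 0 ∧ b * a = 0) ∧ L.sum = e := by
  induction N using IsArtinian.induction with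
  | _ N IH =>
  intro e hN hc hi
  by_cases he0 : e = 0
  · exact ⟨[], by simp, by simp, by simp [he0]⟩
  by_cases hp : IsPrimEl e
  · refine ⟨[e], ?_, by simp, by simp⟩
    intro h hh
    simp only [List.mem_singleton] at hh
    subst hh
    exact ⟨hc, hi, he0, hp, hi⟩
  have hex : ∃ x : Q, x ≠ 0 ∧ x * e = x ∧
      e ∉ Submodule.span Q (Set.range (fun q => x * q)) := by
    by_contra hcon
    push_neg at hcon
    exact hp fun x h1 h2 => hcon x h1 h2
  obtain ⟨x, hx0, hxe, hxnot⟩ := hex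
  set I := Submodule.span Q (Set.range (fun q => x * q)) with hIdef
  have hI : ∀ w ∈ I, ∀ q : Q, w * q ∈ I := by
    intro w hw
    induction hw using Submodule.span_induction with
    | mem z hz =>
      obtain ⟨q0, rfl⟩ := hz
      intro q
      exact Submodule.subset_span ⟨q0 * q, by show x * (q0 * q) = x * q0 * q; rw [mul_assoc]⟩
    | zero => intro q; simp
    | add a b _ _ ha hb => intro q; rw [add_mul]; exact I.add_mem (ha q) (hb q)
    | smul a z _ hz => intro q; rw [smul_eq_mul, mul_assoc]; exact I.smul_mem a (hz q)
  obtain ⟨g, hgc, hgi, hgmem⟩ := exists_central_idem I hI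
  have hxI : x ∈ I := Submodule.subset_span ⟨1, mul_one x⟩
  have hxg : x * g = x := (hgmem x).mp hxI
  have hg0 : g ≠ 0 := fun h => hx0 (by rw [← hxg, h, mul_zero])
  have hIe : ∀ w ∈ I, w * e = w := by
    intro w hw
    induction hw using Submodule.span_induction with
    | mem z hz =>
      obtain ⟨q0, rfl⟩ := hz
      show x * q0 * e = x * q0
      rw [mul_assoc, ← hc q0, ← mul_assoc, hxe]
    | zero => simp
    | add a b _ _ ha hb => rw [add_mul, ha, hb]
    | smul a z _ hz => rw [smul_eq_mul, mul_assoc, hz]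
  have hgI : g ∈ I := (hgmem g).mpr hgi
  have hge : g * e = g := hIe g hgI
  have heg : e * g = g := by rw [← hgc e]; exact hge
  set e₂ := e - g with he₂def
  have he₂c : ∀ q, e₂ * q = q * e₂ := fun q => by
    rw [he₂def, sub_mul, mul_sub, hc q, hgc q]
  have he₂i : e₂ * e₂ = e₂ := by
    have h1 : (e - g) * (e - g) = e * e - e * g - g * e + g * g := by noncomm_ring
    rw [he₂def, h1, hi, heg, hge, hgi]
    abel
  have he₂e : e₂ * e = e₂ := by rw [he₂def, sub_mul, hi, hge]
  have he₂0 : e₂ ≠ 0 := by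
    intro h
    have : e = g := by rwa [he₂def, sub_eq_zero] at h
    exact hxnot (this ▸ hgI)
  have hge₂ : g * e₂ = 0 := by rw [he₂def, mul_sub, hge, hgi, sub_self]
  have he₂g : e₂ * g = 0 := by rw [he₂def, sub_mul, heg, hgi, sub_self]
  have hlt1 : Submodule.span Q {g} < N := by
    rw [← hN]
    refine lt_of_le_of_ne ?_ ?_
    · rw [Submodule.span_le, Set.singleton_subset_iff]
      exact Submodule.mem_span_singleton.mpr ⟨g, by rw [smul_eq_mul]; exact hge⟩
    · intro hEq
      have hmem : e ∈ Submodule.span Q {g} := by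
        rw [hEq]; exact Submodule.mem_span_singleton_self e
      obtain ⟨c, hcg⟩ := Submodule.mem_span_singleton.mp hmem
      have h2 : e * g = e := by rw [← hcg, smul_eq_mul, mul_assoc, hgi]
      rw [heg] at h2
      exact he₂0 (by rw [he₂def, ← h2, sub_self])
  have hlt2 : Submodule.span Q {e₂} < N := by
    rw [← hN]
    refine lt_of_le_of_ne ?_ ?_
    · rw [Submodule.span_le, Set.singleton_subset_iff]
      exact Submodule.mem_span_singleton.mpr ⟨e₂, by rw [smul_eq_mul]; exact he₂e⟩
    · intro hEq
      have hmem : e ∈ Submodule.span Q {e₂} := by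
        rw [hEq]; exact Submodule.mem_span_singleton_self e
      obtain ⟨c, hce⟩ := Submodule.mem_span_singleton.mp hmem
      have h2 : e * g = 0 := by
        rw [← hce, smul_eq_mul, mul_assoc, he₂g, mul_zero]
      rw [heg] at h2
      exact hg0 h2
  obtain ⟨L₁, hL₁p, hL₁pair, hL₁sum⟩ := IH _ hlt1 g rfl hgc hgi
  obtain ⟨L₂, hL₂p, hL₂pair, hL₂sum⟩ := IH _ hlt2 e₂ rfl he₂c he₂i
  refine ⟨L₁ ++ L₂, ?_, ?_, by
    rw [List.sum_append, hL₁sum, hL₂sum, he₂def]; abel⟩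
  · intro h hh
    rcases List.mem_append.mp hh with h1 | h2
    · obtain ⟨c1, c2, c3, c4, c5⟩ := hL₁p h h1
      exact ⟨c1, c2, c3, c4, by rw [← c5, mul_assoc, hge]⟩
    · obtain ⟨c1, c2, c3, c4, c5⟩ := hL₂p h h2
      exact ⟨c1, c2, c3, c4, by rw [← c5, mul_assoc, he₂e]⟩
  · rw [List.pairwise_append]
    refine ⟨hL₁pair, hL₂pair, ?_⟩
    intro a ha b hb
    have ha5 := (hL₁p a ha).2.2.2.2  -- a * g = a
    have hb5 := (hL₂p b hb).2.2.2.2  -- b * e₂ = b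
    constructor
    · calc a * b = (a * g) * b := by rw [ha5]
        _ = a * (g * b) := by rw [mul_assoc]
        _ = a * (b * g) := by rw [hgc b]
        _ = (a * b) * g := by rw [← mul_assoc]
        _ = (a * (b * e₂)) * g := by rw [hb5]
        _ = (a * b) * (e₂ * g) := by rw [← mul_assoc, mul_assoc (a * b)]
        _ = 0 := by rw [he₂g, mul_zero]
    · calc b * a = (b * e₂) * a := by rw [hb5]
        _ = b * (e₂ * a) := by rw [mul_assoc]
        _ = b * (a * e₂) := by rw [he₂c a]
        _ = (b * a) * e₂ := by rw [← mul_assoc]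
        _ = (b * (a * g)) * e₂ := by rw [ha5]
        _ = (b * a) * (g * e₂) := by rw [← mul_assoc, mul_assoc (b * a)]
        _ = 0 := by rw [hge₂, mul_zero]

end SS2

section Phi
variable {Q : Type*} [Ring Q] {e : Q}

private lemma phi_corner (hc : ∀ q : Q, e * q = q * e) (hi : e * e = e) (a b : Q) :
    e * a * (e * b) = e * (a * b) := by
  rw [mul_assoc, ← mul_assoc a e b, ← hc a, mul_assoc e a b, ← mul_assoc, hi]

private lemma phi_tail (hc : ∀ q : Q, e * q = q * e) (hi : e * e = e) (a : Q) :
    e * a * (1 - e) = 0 := by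
  rw [mul_sub, mul_one, mul_assoc, ← hc a, ← mul_assoc, hi, sub_self]

private lemma phi_head (hi : e * e = e) (b : Q) :
    (1 - e) * (e * b) = 0 := by
  rw [sub_mul, one_mul, ← mul_assoc, hi, sub_self]

private lemma phi_last (hi : e * e = e) : (1 - e) * (1 - e) = 1 - e := by
  have : (1 - e) * (1 - e) = 1 - e - e + e * e := by noncomm_ring
  rw [this, hi]; abel

private lemma phi_mul (hc : ∀ q : Q, e * q = q * e) (hi : e * e = e) (a b : Q) :
    (e * a + (1 - e)) * (e * b + (1 - e)) = e * (a * b) + (1 - e) := by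
  rw [add_mul, mul_add, mul_add, phi_corner hc hi, phi_tail hc hi, phi_head hi, phi_last hi]
  abel

private lemma phi_unit (hc : ∀ q : Q, e * q = q * e) (hi : e * e = e) {a : Q}
    (ha : IsUnit a) : IsUnit (e * a + (1 - e)) := by
  obtain ⟨u, rfl⟩ := ha
  refine ⟨⟨e * u + (1 - e), e * ↑u⁻¹ + (1 - e), ?_, ?_⟩, rfl⟩
  · rw [phi_mul hc hi, Units.mul_inv, mul_one, add_sub_cancel]
  · rw [phi_mul hc hi, Units.inv_mul, mul_one, add_sub_cancel]

private lemma phi_unit_of_sub (hi : e * e = e) (h : IsUnit (1 - e)) : e = 0 := by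
  obtain ⟨u, hu⟩ := h
  have h1 : e * (1 - e) = 0 := by rw [mul_sub, mul_one, hi, sub_self]
  calc e = e * (↑u * ↑u⁻¹) := by rw [Units.mul_inv, mul_one]
    _ = e * (1 - e) * ↑u⁻¹ := by rw [← hu, mul_assoc]
    _ = 0 := by rw [h1, zero_mul]

end Phi

section Loc
variable {R Q : Type*} [Ring R] [Ring Q] {f : R →+* Q}

private lemma loc_inj (hf : IsLeftLocalization R (regSet R) f) :
    ∀ r : R, f r = 0 → r = 0 := by
  intro r hr
  obtain ⟨s, hs, h0⟩ := (hf.2.2 r).mp hr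
  exact (hs r).2 h0

private lemma loc_rep (hf : IsLeftLocalization R (regSet R) f) (q : Q) :
    ∃ c ∈ regSet R, ∃ a : R, f c * q = f a := by
  obtain ⟨s, hs, r, u, hu, hq⟩ := hf.2.1 q
  refine ⟨s, hs, r, ?_⟩
  rw [hq, ← hu, ← mul_assoc, Units.mul_inv, one_mul]

private lemma loc_unit_reg (hf : IsLeftLocalization R (regSet R) f) {r : R}
    (h : IsUnit (f r)) : r ∈ regSet R := by
  obtain ⟨u, hu⟩ := h
  intro x
  constructor
  · intro hx
    apply loc_inj hf
    have h1 : f x * f r = 0 := by rw [← map_mul, hx, map_zero]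
    calc f x = f x * (↑u * ↑u⁻¹) := by rw [Units.mul_inv, mul_one]
      _ = f x * f r * ↑u⁻¹ := by rw [hu, mul_assoc]
      _ = 0 := by rw [h1, zero_mul]
  · intro hx
    apply loc_inj hf
    have h1 : f r * f x = 0 := by rw [← map_mul, hx, map_zero]
    calc f x = (↑u⁻¹ * ↑u) * f x := by rw [Units.inv_mul, one_mul]
      _ = ↑u⁻¹ * (f r * f x) := by rw [hu, mul_assoc]
      _ = 0 := by rw [h1, mul_zero]

/-- The candidate maximal denominator set attached to a central idempotent `e` of `Q`. -/
def Se (f : R →+* Q) (e : Q) : Set R := {r : R | IsUnit (e * f r + (1 - e))}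

private lemma Se_mem_of_unit (hc : ∀ q : Q, e * q = q * e) (hi : e * e = e) {r : R}
    (h : IsUnit (f r)) : r ∈ Se f e := phi_unit hc hi h

private lemma loc_rep_e (hf : IsLeftLocalization R (regSet R) f)
    {e : Q} (hc : ∀ q : Q, e * q = q * e) (hi : e * e = e) :
    ∃ c ∈ regSet R, ∃ a : R, f c * e = f a ∧ a ∈ Se f e := by
  obtain ⟨c, hcreg, a, hca⟩ := loc_rep hf e
  refine ⟨c, hcreg, a, hca, ?_⟩
  have h1 : e * f a = e * f c := by
    rw [← hca, ← hc (f c), ← mul_assoc, hi]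
  show IsUnit (e * f a + (1 - e))
  rw [h1]
  exact phi_unit hc hi (hf.1 c hcreg)

private lemma Se_den (hden : IsLeftDenSet R (regSet R))
    (hf : IsLeftLocalization R (regSet R) f)
    {e : Q} (hc : ∀ q : Q, e * q = q * e) (hi : e * e = e) (he0 : e ≠ 0) :
    IsLeftDenSet R (Se f e) := by
  constructor
  · refine ⟨?_, ?_, ?_, ?_⟩
    · show IsUnit (e * f 1 + (1 - e))
      rw [map_one, mul_one, add_sub_cancel]
      exact isUnit_one
    · intro h0
      have : IsUnit (e * f 0 + (1 - e)) := h0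
      rw [map_zero, mul_zero, zero_add] at this
      exact he0 (phi_unit_of_sub hi this)
    · intro s hs t ht
      show IsUnit (e * f (s * t) + (1 - e))
      rw [map_mul, ← phi_mul hc hi]
      exact hs.mul ht
    · -- Ore condition
      intro r s hs
      have hu : IsUnit (e * f s + (1 - e)) := hs
      set w : Q := ↑hu.unit⁻¹ with hw
      have hwphi : w * (e * f s + (1 - e)) = 1 := hu.unit.inv_mul
      -- key identity : e * f r = (e * f r * w * e) * f s
      have h5 : e * (e * f s + (1 - e)) = e * f s := by
        rw [mul_add, ← mul_assoc, hi, mul_sub, mul_one, hi, sub_self, add_zero]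
      have keyid : (e * f r * w * e) * f s = e * f r := by
        calc (e * f r * w * e) * f s = (e * f r * w) * (e * f s) := by
              rw [mul_assoc]
          _ = (e * f r * w) * (e * (e * f s + (1 - e))) := by rw [h5]
          _ = (e * f r * w) * ((e * f s + (1 - e)) * e) := by rw [hc (e * f s + (1 - e))]
          _ = (e * f r * (w * (e * f s + (1 - e)))) * e := by
              rw [← mul_assoc, mul_assoc (e * f r) w]
          _ = e * f r * e := by rw [hwphi, mul_one]
          _ = e * (e * f r) := by rw [mul_assoc, ← hc (f r)]
          _ = e * f r := by rw [← mul_assoc, hi]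
      obtain ⟨c, hcreg, a, hca, haSe⟩ := loc_rep_e hf hc hi
      obtain ⟨d, hdreg, b, hdb⟩ := loc_rep hf (e * f r * w * e)
      obtain ⟨d₁, hd₁, r₁, hord⟩ := hden.1.2.2.2 c d hdreg
      refine ⟨d₁ * a, ?_, r₁ * b, ?_⟩
      · show IsUnit (e * f (d₁ * a) + (1 - e))
        rw [map_mul, ← phi_mul hc hi]
        exact (phi_unit hc hi (hf.1 d₁ hd₁)).mul haSe
      · have h8 : f d₁ * f c = f r₁ * f d := by
          rw [← map_mul, ← map_mul, hord]
        have h9 : f d₁ * f a * f r = f r₁ * f b * f s := by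
          calc f d₁ * f a * f r = f d₁ * (f c * e) * f r := by rw [hca]
            _ = (f d₁ * f c) * (e * f r) := by
                rw [← mul_assoc, mul_assoc (f d₁ * f c)]
            _ = (f r₁ * f d) * (e * f r) := by rw [h8]
            _ = (f r₁ * f d) * ((e * f r * w * e) * f s) := by rw [keyid]
            _ = (f r₁ * (f d * (e * f r * w * e))) * f s := by
                rw [mul_assoc (f r₁), ← mul_assoc (f d)]
                rw [← mul_assoc]
            _ = (f r₁ * f b) * f s := by rw [hdb]
            _ = f r₁ * f b * f s := rfl
        have h10 : f (d₁ * a * r - r₁ * b * s) = 0 := by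
          rw [map_sub, map_mul, map_mul, map_mul, map_mul, h9, sub_self]
        exact sub_eq_zero.mp (loc_inj hf _ h10)
  · -- denominator condition
    intro r s hs hrs
    have hu : IsUnit (e * f s + (1 - e)) := hs
    have h1 : e * f r * (e * f s + (1 - e)) = 0 := by
      rw [mul_add, phi_corner hc hi, phi_tail hc hi, ← map_mul, hrs, map_zero, mul_zero, add_zero]
    have h2 : e * f r = 0 := by
      calc e * f r = e * f r * ((e * f s + (1 - e)) * ↑hu.unit⁻¹) := by
            rw [hu.mul_val_inv, mul_one]
        _ = (e * f r * (e * f s + (1 - e))) * ↑hu.unit⁻¹ := by rw [← mul_assoc]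
        _ = 0 := by rw [h1, zero_mul]
    obtain ⟨c, hcreg, a, hca, haSe⟩ := loc_rep_e hf hc hi
    refine ⟨a, haSe, ?_⟩
    apply loc_inj hf
    rw [map_mul, ← hca, mul_assoc, h2, mul_zero]

end Loc

section LocM
variable {R Q : Type*} [Ring R] [Ring Q] {f : R →+* Q}

/-- Step 1 of Lemma M : from a non-invertible corner component, produce `t ∈ S`
with `f t * e = 0`. -/
private lemma lemmaM_step1 [IsSemisimpleRing Q]
    (hden : IsLeftDenSet R (regSet R)) (hf : IsLeftLocalization R (regSet R) f)
    {S : Set R} (hS : IsLeftDenSet R S)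
    {e : Q} (hec : ∀ q : Q, e * q = q * e) (hei : e * e = e) (hprim : IsPrimEl e)
    {s : R} (hsS : s ∈ S) (hnu : ¬IsUnit (e * f s + (1 - e))) :
    ∃ t ∈ S, f t * e = 0 := by
  obtain ⟨x, hx0, hxann⟩ := ss_nonunit_lann hnu
  have hphi1e : (e * f s + (1 - e)) * (1 - e) = 1 - e := by
    rw [add_mul, phi_tail hec hei, phi_last hei, zero_add]
  have hx1e : x * (1 - e) = 0 := by
    calc x * (1 - e) = x * ((e * f s + (1 - e)) * (1 - e)) := by rw [hphi1e]
      _ = (x * (e * f s + (1 - e))) * (1 - e) := by rw [mul_assoc]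
      _ = 0 := by rw [hxann, zero_mul]
  have hxe : x * e = x := by
    have h1 : x * 1 - x * e = 0 := by rw [← mul_sub]; exact hx1e
    rw [mul_one] at h1
    have := sub_eq_zero.mp h1
    exact this.symm
  have hxfs : x * f s = 0 := by
    have h2 : x * (e * f s) + x * (1 - e) = 0 := by rw [← mul_add]; exact hxann
    rw [hx1e, add_zero, ← mul_assoc, hxe] at h2
    exact h2
  obtain ⟨c, hcreg, a, hca⟩ := loc_rep hf x
  have hfcu : IsUnit (f c) := hf.1 c hcreg
  have ha0 : a ≠ 0 := by
    intro h
    apply hx0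
    have h3 : f c * x = 0 := by rw [hca, h, map_zero]
    calc x = (↑hfcu.unit⁻¹ * f c) * x := by rw [hfcu.val_inv_mul, one_mul]
      _ = ↑hfcu.unit⁻¹ * (f c * x) := by rw [mul_assoc]
      _ = 0 := by rw [h3, mul_zero]
  have hafs : a * s = 0 := by
    apply loc_inj hf
    rw [map_mul, ← hca, mul_assoc, hxfs, mul_zero]
  obtain ⟨t₀, ht₀S, ht₀a⟩ := hS.2 a s hsS hafs
  have hfae : f a * e = f a := by rw [← hca, mul_assoc, hxe]
  have hfa0 : f a ≠ 0 := fun h => ha0 (loc_inj hf a h)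
  have hespan : e ∈ Submodule.span Q (Set.range fun q => f a * q) := hprim (f a) hfa0 hfae
  -- closure properties of D := {z | ∃ t ∈ S, f t * z = 0}
  have Dleft : ∀ (b : R) (z : Q), (∃ t ∈ S, f t * z = 0) → ∃ t ∈ S, f t * (f b * z) = 0 := by
    rintro b z ⟨t, htS, htz⟩
    obtain ⟨s₂, hs₂, r₂, hore⟩ := hS.1.2.2.2 b t htS
    refine ⟨s₂, hs₂, ?_⟩
    rw [← mul_assoc, ← map_mul, hore, map_mul, mul_assoc, htz, mul_zero]
  have Dadd : ∀ z z' : Q, (∃ t ∈ S, f t * z = 0) → (∃ t ∈ S, f t * z' = 0) →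
      ∃ t ∈ S, f t * (z + z') = 0 := by
    rintro z z' ⟨t, htS, htz⟩ ⟨t', ht'S, ht'z⟩
    obtain ⟨s₄, hs₄, r₄, hore⟩ := hS.1.2.2.2 t' t htS
    refine ⟨s₄ * t', hS.1.2.2.1 s₄ hs₄ t' ht'S, ?_⟩
    have e1 : f (s₄ * t') * z = 0 := by
      rw [map_mul, ← map_mul, hore, map_mul, mul_assoc, htz, mul_zero]
    have e2 : f (s₄ * t') * z' = 0 := by
      rw [map_mul, mul_assoc, ht'z, mul_zero]
    rw [mul_add, e1, e2, add_zero]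
  have hD' : ∀ z ∈ Submodule.span Q (Set.range fun q => f a * q),
      ∃ c' ∈ regSet R, ∃ t ∈ S, f t * (f c' * z) = 0 := by
    intro z hz
    induction hz using Submodule.span_induction with
    | mem z hz =>
      obtain ⟨q0, rfl⟩ := hz
      refine ⟨1, hden.1.1, t₀, ht₀S, ?_⟩
      show f t₀ * (f 1 * (f a * q0)) = 0
      rw [map_one, one_mul, ← mul_assoc, ← map_mul, ht₀a, map_zero, zero_mul]
    | zero => exact ⟨1, hden.1.1, 1, hS.1.1, by rw [mul_zero, mul_zero]⟩
    | add z z' hz hz' ihz ihz' =>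
      obtain ⟨c₁, hc₁, hD₁⟩ := ihz
      obtain ⟨c₂, hc₂, hD₂⟩ := ihz'
      obtain ⟨c₃, hc₃, r₃, hore⟩ := hden.1.2.2.2 c₁ c₂ hc₂
      refine ⟨c₃ * c₁, hden.1.2.2.1 c₃ hc₃ c₁ hc₁, ?_⟩
      have e1 : f (c₃ * c₁) * (z + z') = f c₃ * (f c₁ * z) + f r₃ * (f c₂ * z') := by
        rw [mul_add, map_mul, mul_assoc]
        congr 1
        rw [← map_mul, hore, map_mul, mul_assoc]
      rw [e1]
      exact Dadd _ _ (Dleft c₃ _ hD₁) (Dleft r₃ _ hD₂)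
    | smul p z hzmem ihz =>
      obtain ⟨c₁, hc₁, hD₁⟩ := ihz
      obtain ⟨d, hd, b, hdb⟩ := loc_rep hf p
      obtain ⟨c', hc', r', hore1⟩ := hden.1.2.2.2 1 d hd
      obtain ⟨c₅, hc₅, b₅, hore2⟩ := hden.1.2.2.2 (r' * b) c₁ hc₁
      refine ⟨c₅ * c', hden.1.2.2.1 c₅ hc₅ c' hc', ?_⟩
      have e3 : f c' * p = f (r' * b) := by
        have : f c' = f (r' * d) := by rw [← hore1, mul_one]
        rw [this, map_mul, mul_assoc, hdb, ← map_mul]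
      have e2 : f (c₅ * c') * (p • z) = f b₅ * (f c₁ * z) := by
        rw [smul_eq_mul, map_mul, mul_assoc, ← mul_assoc (f c'), e3, ← mul_assoc, ← map_mul,
          hore2, map_mul, mul_assoc]
      rw [e2]
      exact Dleft b₅ _ hD₁
  obtain ⟨c₆, hc₆, t₆, ht₆S, ht₆⟩ := hD' e hespan
  have hfc₆u : IsUnit (f c₆) := hf.1 c₆ hc₆
  have h11 : f t₆ * e * f c₆ = 0 := by
    rw [mul_assoc, hec (f c₆)]
    exact ht₆
  refine ⟨t₆, ht₆S, ?_⟩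
  calc f t₆ * e = f t₆ * e * (f c₆ * ↑hfc₆u.unit⁻¹) := by rw [hfc₆u.mul_val_inv, mul_one]
    _ = (f t₆ * e * f c₆) * ↑hfc₆u.unit⁻¹ := (mul_assoc (f t₆ * e) (f c₆) _).symm
    _ = 0 := by rw [h11, zero_mul]

end LocM

section LocM2
variable {R Q : Type*} [Ring R] [Ring Q] {f : R →+* Q}

/-- common annihilating element over a list -/
private lemma common_t {S : Set R} (hS : IsLeftDenSet R S) :
    ∀ L : List Q, (∀ e ∈ L, ∃ t ∈ S, f t * e = 0) → ∃ t ∈ S, ∀ e ∈ L, f t * e = 0 := by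
  intro L
  induction L with
  | nil => intro _; exact ⟨1, hS.1.1, by simp⟩
  | cons e L ih =>
    intro h
    obtain ⟨t₁, ht₁S, ht₁⟩ := h e List.mem_cons_self
    obtain ⟨t₂, ht₂S, ht₂⟩ := ih fun e' he' => h e' (List.mem_cons_of_mem e he')
    obtain ⟨s₁, hs₁, r₁, hore⟩ := hS.1.2.2.2 t₂ t₁ ht₁S
    refine ⟨s₁ * t₂, hS.1.2.2.1 s₁ hs₁ t₂ ht₂S, ?_⟩
    intro e' he'
    rcases List.mem_cons.mp he' with h1 | h2
    · subst h1
      rw [map_mul, ← map_mul, hore, map_mul, mul_assoc, ht₁, mul_zero]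
    · rw [map_mul, mul_assoc, ht₂ e' h2, mul_zero]

/-- Lemma M : every left denominator set of `R` lands in some `Se f e`. -/
private lemma lemmaM [IsSemisimpleRing Q]
    (hden : IsLeftDenSet R (regSet R)) (hf : IsLeftLocalization R (regSet R) f)
    {L : List Q}
    (hL : ∀ h ∈ L, (∀ q : Q, h * q = q * h) ∧ h * h = h ∧ h ≠ 0 ∧ IsPrimEl h)
    (hsum : L.sum = 1)
    {S : Set R} (hS : IsLeftDenSet R S) :
    ∃ e ∈ L, ∀ s ∈ S, IsUnit (e * f s + (1 - e)) := by
  by_contra hcon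
  push_neg at hcon
  have step1 : ∀ e ∈ L, ∃ t ∈ S, f t * e = 0 := by
    intro e heL
    obtain ⟨hec, hei, he0, hprim⟩ := hL e heL
    obtain ⟨s, hsS, hnu⟩ := hcon e heL
    exact lemmaM_step1 hden hf hS hec hei hprim hsS hnu
  obtain ⟨t, htS, ht⟩ := common_t hS L step1
  have hsum0 : ∀ L' : List Q, (∀ e ∈ L', f t * e = 0) → f t * L'.sum = 0 := by
    intro L'
    induction L' with
    | nil => intro _; simp
    | cons e L' ih =>
      intro h
      rw [List.sum_cons, mul_add, h e List.mem_cons_self,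
        ih fun e' he' => h e' (List.mem_cons_of_mem e he'), add_zero]
  have hft : f t = 0 := by
    have := hsum0 L ht
    rwa [hsum, mul_one] at this
  have : t = 0 := loc_inj hf t hft
  exact hS.1.2.1 (this ▸ htS)

/-- Maximality of `Se f e`. -/
private lemma Se_max [IsSemisimpleRing Q]
    (hden : IsLeftDenSet R (regSet R)) (hf : IsLeftLocalization R (regSet R) f)
    {L : List Q}
    (hL : ∀ h ∈ L, (∀ q : Q, h * q = q * h) ∧ h * h = h ∧ h ≠ 0 ∧ IsPrimEl h)
    (hsum : L.sum = 1)
    (hpair : L.Pairwise (fun a b => a * b = 0 ∧ b * a = 0))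
    {e : Q} (heL : e ∈ L) :
    IsMaxLeftDenSet R (Se f e) := by
  obtain ⟨hec, hei, he0, hprim⟩ := hL e heL
  refine ⟨Se_den hden hf hec hei he0, ?_⟩
  intro T hT hsub
  obtain ⟨e', he'L, hTe'⟩ := lemmaM hden hf hL hsum hT
  obtain ⟨he'c, he'i, he'0, he'prim⟩ := hL e' he'L
  obtain ⟨c, hcreg, a, hca, haSe⟩ := loc_rep_e hf hec hei
  by_cases hee' : e' = e
  · subst hee'
    exact Set.Subset.antisymm (fun t ht => hTe' t ht) hsub
  · exfalso
    have horth : e * e' = 0 := by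
      have hsymm : Symmetric (fun a b : Q => a * b = 0 ∧ b * a = 0) :=
        fun a b h => ⟨h.2, h.1⟩
      haveI : Std.Symm (fun a b : Q => a * b = 0 ∧ b * a = 0) := ⟨fun a b h => hsymm h⟩
      exact (hpair.forall heL he'L (fun h => hee' h.symm)).1
    have haT : a ∈ T := hsub haSe
    have h1 : IsUnit (e' * f a + (1 - e')) := hTe' a haT
    have h2 : e' * f a = 0 := by
      rw [← hca, ← mul_assoc, he'c (f c), mul_assoc, he'c e, horth, mul_zero]
    rw [h2, zero_add] at h1
    exact he'0 (phi_unit_of_sub he'i h1)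
end LocM2

section ProdPhi
variable {Q : Type*} [Ring Q]

private lemma central_sum {L : List Q} (h : ∀ e ∈ L, ∀ q : Q, e * q = q * e) :
    ∀ q : Q, L.sum * q = q * L.sum := by
  induction L with
  | nil => simp
  | cons e L ih =>
    intro q
    rw [List.sum_cons, add_mul, mul_add, h e List.mem_cons_self q,
      ih (fun e' he' => h e' (List.mem_cons_of_mem e he')) q]

private lemma mul_sum_zero {a : Q} {L : List Q} (h : ∀ e ∈ L, a * e = 0) : a * L.sum = 0 := by
  induction L with
  | nil => simp
  | cons e L ih =>
    rw [List.sum_cons, mul_add, h e List.mem_cons_self,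
      ih fun e' he' => h e' (List.mem_cons_of_mem e he'), add_zero]

private lemma sum_mul_zero {a : Q} {L : List Q} (h : ∀ e ∈ L, e * a = 0) : L.sum * a = 0 := by
  induction L with
  | nil => simp
  | cons e L ih =>
    rw [List.sum_cons, add_mul, h e List.mem_cons_self,
      ih fun e' he' => h e' (List.mem_cons_of_mem e he'), add_zero]

private lemma prod_phi (q : Q) :
    ∀ L : List Q, (∀ h ∈ L, ∀ p : Q, h * p = p * h) →
      L.Pairwise (fun a b => a * b = 0 ∧ b * a = 0) →
      (L.map fun e => e * q + (1 - e)).prod = L.sum * q + (1 - L.sum) := by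
  intro L
  induction L with
  | nil => simp
  | cons e L ih =>
    intro hcen hpair
    obtain ⟨hhead, htail⟩ := List.pairwise_cons.mp hpair
    have hcentail := fun e' he' => hcen e' (List.mem_cons_of_mem e he')
    rw [List.map_cons, List.prod_cons, ih hcentail htail, List.sum_cons]
    set E := L.sum with hE
    have hEc : ∀ p : Q, E * p = p * E := central_sum hcentail
    have heE : e * E = 0 := mul_sum_zero fun e' he' => (hhead e' he').1
    have hEe : E * e = 0 := sum_mul_zero fun e' he' => (hhead e' he').2
    have h1 : (e * q) * (E * q) = 0 := by
      rw [← mul_assoc, mul_assoc e q E, ← hEc q, ← mul_assoc, heE, zero_mul, zero_mul]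
    have h2 : (e * q) * (1 - E) = e * q - 0 := by
      rw [mul_sub, mul_one, mul_assoc, ← hEc q, ← mul_assoc, heE, zero_mul]
    have h3 : (1 - e) * (E * q) = E * q - 0 := by
      rw [sub_mul, one_mul, ← mul_assoc, heE, zero_mul]
    have h4 : (1 - e) * (1 - E) = 1 - E - e + 0 := by
      have expand : (1 - e) * (1 - E) = 1 - E - e + e * E := by noncomm_ring
      rw [expand, heE]
    rw [add_mul, mul_add, mul_add, h1, h2, h3, h4, add_mul]
    abel
end ProdPhi

theorem stmt14.{u} (R : Type u) [Ring R]
    (hden : IsLeftDenSet R (regSet R))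
    (Q : Type u) [Ring Q] (f : R →+* Q)
    (hf : IsLeftLocalization R (regSet R) f)
    (hss : IsSemisimpleRing Q) :
    stronglyLocalizable R = regSet R := by
  classical
  obtain ⟨L, hLp, hLpair, hLsum⟩ :=
    decomp_aux (Submodule.span Q {(1 : Q)}) 1 rfl (fun q => by rw [one_mul, mul_one]) (one_mul 1)
  have hL4 : ∀ h ∈ L, (∀ q : Q, h * q = q * h) ∧ h * h = h ∧ h ≠ 0 ∧ IsPrimEl h :=
    fun h hh => ⟨(hLp h hh).1, (hLp h hh).2.1, (hLp h hh).2.2.1, (hLp h hh).2.2.2.1⟩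
  apply Set.Subset.antisymm
  · intro r hr
    have hunit : ∀ e ∈ L, IsUnit (e * f r + (1 - e)) := by
      intro e heL
      exact hr (Se f e) (Se_max hden hf hL4 hLsum hLpair heL)
    have hfr : IsUnit (f r) := by
      have hp := prod_phi (f r) L (fun h hh => (hL4 h hh).1) hLpair
      rw [hLsum, one_mul, sub_self, add_zero] at hp
      rw [← hp]
      refine List.prod_isUnit ?_
      intro x hx
      obtain ⟨e, heL, rfl⟩ := List.mem_map.mp hx
      exact hunit e heL
    exact loc_unit_reg hf hfr
  · intro r hr S hSmax
    obtain ⟨e, heL, hSsub⟩ := lemmaM hden hf hL4 hLsum hSmax.1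
    obtain ⟨hec, hei, he0, _⟩ := hL4 e heL
    have hEq : Se f e = S :=
      hSmax.2 (Se f e) (Se_den hden hf hec hei he0) (fun s hs => hSsub s hs)
    rw [← hEq]
    exact phi_unit hec hei (hf.1 r hr)
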